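/- Let U ⊆ ℂⁿ be a bounded open connected set and g ∈ ℂ. For every ξ ∈ U ∩ 𝕌ⁿ and every ν ∈ ℤⁿ with ν ≥ 0, the rescaled Calogero–Sutherland Harish-Chandra coefficients converge to the normalized Toda Harish-Chandra coefficients: lim_{c→+∞} â^cs_ν(ξ;k^(c)) = Δ_U(ξ)·a_ν(ξ;g). -/

import Mathlib

open scoped BigOperators
open Finset Filter Topology

noncomputable section

namespace TodaBC

variable {n : ℕ}

/-- The bilinear pairing `⟨ξ,x⟩ = ∑_j ξ_j x_j` on `ℂⁿ`. -/
def pc (ξ x : Fin n → ℂ) : ℂ := ∑ j, ξ j * x j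

/-- Complexification of an integer vector. -/
def zc (ν : Fin n → ℤ) : Fin n → ℂ := fun j => (ν j : ℂ)

/-- Complexification of a real vector. -/
def cr (x : Fin n → ℝ) : Fin n → ℂ := fun j => (x j : ℂ)

/-- `ρ = (n, n-1, …, 1)` as a complex vector (0-indexed: `ρ_j = n - j`). -/
def rhoC (n : ℕ) : Fin n → ℂ := fun j => ((n - (j : ℕ) : ℕ) : ℂ)

/-- `ρ = (n, n-1, …, 1)` as a real vector. -/
def rhoR (n : ℕ) : Fin n → ℝ := fun j => ((n - (j : ℕ) : ℕ) : ℝ)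

/-- `⟨ν,ρ⟩` for an integer vector `ν`. -/
def rp (ν : Fin n → ℤ) : ℤ := ∑ j, ν j * ((n : ℤ) - ((j : ℕ) : ℤ))

/-- `ν ≥ 0` : all initial partial sums of `ν` are nonnegative. -/
def dominant (ν : Fin n → ℤ) : Prop := ∀ k : Fin n, 0 ≤ ∑ j ∈ Finset.Iic k, ν j

/-- The domain `𝕌ⁿ = {ξ ∈ ℂⁿ ∣ ⟨ν-2ξ,ν⟩ ≠ 0 for all ν > 0}`. -/
def Uset (n : ℕ) : Set (Fin n → ℂ) :=
  {ξ | ∀ ν : Fin n → ℤ, dominant ν → ν ≠ 0 → pc (zc ν - 2 • ξ) (zc ν) ≠ 0}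

/-- Standard basis vector of `ℤⁿ` with (0-based) index `k`. -/
def eZ (n : ℕ) (k : ℕ) : Fin n → ℤ := fun i => if (i : ℕ) = k then 1 else 0

/-- RHS of the Toda Harish-Chandra recurrence: `∑_{α ∈ S} a_α a_{ν-α}`. -/
def todaRHS (g : ℂ) (a : (Fin n → ℤ) → ℂ) (ν : Fin n → ℤ) : ℂ :=
  (∑ k ∈ Finset.range (n - 1), 2 * a (ν - (eZ n k - eZ n (k + 1))))
    + g * a (ν - eZ n (n - 1)) + (1 / 4) * a (ν - 2 • eZ n (n - 1))

/-- `a` is the family of Harish-Chandra coefficients `ν ↦ a_ν(ξ;g)`. -/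
def IsHC (g : ℂ) (ξ : Fin n → ℂ) (a : (Fin n → ℤ) → ℂ) : Prop :=
  a 0 = 1 ∧ (∀ ν, ¬ dominant ν → a ν = 0) ∧
    ∀ ν, dominant ν → ν ≠ 0 →
      a ν = (pc (zc ν - 2 • ξ) (zc ν))⁻¹ * todaRHS g a ν

/-- Term of the Harish-Chandra series: `a_ν e^{⟨ξ-ν,x⟩}`. -/
def hcTerm (a : (Fin n → ℤ) → ℂ) (ξ x : Fin n → ℂ) (ν : Fin n → ℤ) : ℂ :=
  a ν * Complex.exp (pc (ξ - zc ν) x)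

/-- The Toda + Morse potential `∑_{α ∈ S} a_α e^{-⟨α,x⟩}`. -/
def potential (n : ℕ) (g : ℂ) (x : Fin n → ℂ) : ℂ :=
  (∑ k ∈ Finset.range (n - 1), 2 * Complex.exp (- pc (zc (eZ n k - eZ n (k + 1))) x))
    + g * Complex.exp (- pc (zc (eZ n (n - 1))) x)
    + (1 / 4) * Complex.exp (- pc (zc (2 • eZ n (n - 1))) x)

/-- `∂²f/∂x_j²` evaluated at `x`. -/
def secondPartial (f : (Fin n → ℂ) → ℂ) (j : Fin n) (x : Fin n → ℂ) : ℂ :=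
  iteratedDeriv 2 (fun s => f (Function.update x j s)) (x j)

/-- `ℂⁿ_{reg,+}`. -/
def regPlus (n : ℕ) : Set (Fin n → ℂ) :=
  {ξ | (∀ j, ∀ m : ℤ, 0 < m → 2 * ξ j ≠ (m : ℂ)) ∧
    ∀ j k : Fin n, j < k → ∀ m : ℤ, 0 < m → ξ j + ξ k ≠ (m : ℂ) ∧ ξ j - ξ k ≠ (m : ℂ)}

/-- `ℂⁿ_{reg}`. -/
def regSet (n : ℕ) : Set (Fin n → ℂ) :=
  {ξ | (∀ j, ∀ m : ℤ, 2 * ξ j ≠ (m : ℂ)) ∧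
    ∀ j k : Fin n, j < k → ∀ m : ℤ, ξ j + ξ k ≠ (m : ℂ) ∧ ξ j - ξ k ≠ (m : ℂ)}

/-- `ℂⁿ_{reg,-}`. -/
def regMinus (n : ℕ) : Set (Fin n → ℂ) :=
  {ξ | (∀ j, ∀ m : ℤ, m ≤ 0 → 2 * ξ j ≠ (m : ℂ)) ∧
    ∀ j k : Fin n, j < k → ∀ m : ℤ, m ≤ 0 → ξ j + ξ k ≠ (m : ℂ) ∧ ξ j - ξ k ≠ (m : ℂ)}

/-- The condition `x_k - x_{k+1} ≥ R` for `k = 1,…,n` (with `x_{n+1} = 0`). -/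
def spaced (n : ℕ) (R : ℝ) (x : Fin n → ℝ) : Prop :=
  ∀ k : Fin n, (if h : (k : ℕ) + 1 < n then x ⟨(k : ℕ) + 1, h⟩ else 0) + R ≤ x k

/-- The Toda `c`-function `C(ξ;g)`. -/
def Cfun (g : ℂ) (ξ : Fin n → ℂ) : ℂ :=
  (∏ j, Complex.Gamma (2 * ξ j) / Complex.Gamma (1 / 2 + g + ξ j)) *
    ∏ j, ∏ k ∈ Finset.Ioi j, Complex.Gamma (ξ j + ξ k) * Complex.Gamma (ξ j - ξ k)

/-- Action of the signed permutation `(σ,ε)` on `ℂⁿ`: `(wξ)_j = ε_j ξ_{σ_j}`. -/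
def wAct (σ : Equiv.Perm (Fin n)) (ε : Fin n → Bool) (ξ : Fin n → ℂ) : Fin n → ℂ :=
  fun j => (if ε j then 1 else -1) * ξ (σ j)

/-- The hyperoctahedral Whittaker function `Φ_ξ(x;g) = ∑_{w ∈ W} C(wξ;g) φ_{wξ}(x;g)`,
built from an extension `F` of the fundamental Whittaker function. -/
def PhiOf (F : (Fin n → ℂ) → (Fin n → ℂ) → ℂ → ℂ) (g : ℂ) (ξ x : Fin n → ℂ) : ℂ :=
  ∑ σ : Equiv.Perm (Fin n), ∑ ε : Fin n → Bool,
    Cfun g (wAct σ ε ξ) * F (wAct σ ε ξ) x g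

/-- `F` is the holomorphic extension, to `ℂⁿ_{reg,+} × ℂⁿ × ℂ`, of the fundamental Whittaker
function attached to the coefficient family `a`. -/
def IsPhiExt (n : ℕ) (a : (Fin n → ℂ) → ℂ → (Fin n → ℤ) → ℂ)
    (F : (Fin n → ℂ) → (Fin n → ℂ) → ℂ → ℂ) : Prop :=
  DifferentiableOn ℂ (fun p : (Fin n → ℂ) × (Fin n → ℂ) × ℂ => F p.1 p.2.1 p.2.2)
      ((regPlus n) ×ˢ (Set.univ : Set (Fin n → ℂ)) ×ˢ (Set.univ : Set ℂ)) ∧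
    ∀ ξ ∈ Uset n ∩ regPlus n, ∀ x : Fin n → ℂ, ∀ g : ℂ,
      HasSum (fun ν : Fin n → ℤ => hcTerm (a ξ g) ξ x ν) (F ξ x g)

/-- Sign vector with value `+1` on `P`, `-1` on `M`, `0` elsewhere. -/
def es (P M : Finset (Fin n)) (j : Fin n) : ℂ :=
  if j ∈ P then 1 else if j ∈ M then -1 else 0

/-- The coefficient `V_{εJ}(ξ;g)` where `J = P ∪ M`, `ε = +1` on `P` and `-1` on `M`. -/
def Vco (g : ℂ) (ξ : Fin n → ℂ) (P M : Finset (Fin n)) : ℂ :=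
  (∏ j ∈ P ∪ M, (1 / 2 + g + es P M j * ξ j) / (2 * ξ j * (2 * ξ j + es P M j)))
    * (∏ j ∈ P ∪ M, ∏ k ∈ (P ∪ M)ᶜ, (ξ j ^ 2 - ξ k ^ 2)⁻¹)
    * ∏ j ∈ P ∪ M, ∏ j' ∈ (P ∪ M).filter (fun j' => j < j'),
        (es P M j * ξ j + es P M j' * ξ j')⁻¹ * (1 + es P M j * ξ j + es P M j' * ξ j')⁻¹

/-- The coefficient `U_{K,p}(ξ;g)`. -/
def Uco (g : ℂ) (ξ : Fin n → ℂ) (K : Finset (Fin n)) (p : ℕ) : ℂ :=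
  (-1 : ℂ) ^ (p * (p + 1) / 2) *
    ∑ P : Finset (Fin n), ∑ M : Finset (Fin n),
      if P ⊆ K ∧ M ⊆ K ∧ Disjoint P M ∧ P.card + M.card = p then
        (∏ i ∈ P ∪ M, (1 / 2 + g + es P M i * ξ i) / (2 * ξ i * (2 * ξ i + es P M i)))
          * (∏ i ∈ P ∪ M, ∏ k ∈ K \ (P ∪ M), (ξ i ^ 2 - ξ k ^ 2)⁻¹)
          * ∏ i ∈ P ∪ M, ∏ i' ∈ (P ∪ M).filter (fun i' => i < i'),
              (es P M i * ξ i + es P M i' * ξ i')⁻¹ *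
                (1 + es P M i * ξ i + es P M i' * ξ i')⁻¹
      else 0

/-- LHS of the dual difference equation of order `ℓ`, applied to a function `Φf` of the
spectral variable. -/
def diffLHS (g : ℂ) (ℓ : ℕ) (ξ : Fin n → ℂ) (Φf : (Fin n → ℂ) → ℂ) : ℂ :=
  ∑ P : Finset (Fin n), ∑ M : Finset (Fin n),
    if Disjoint P M ∧ P.card + M.card ≤ ℓ then
      Uco g ξ (P ∪ M)ᶜ (ℓ - (P.card + M.card)) * Vco g ξ P M * Φf (ξ + es P M)
    else 0

/-- The set of linear forms `ξ ↦ 2ξ_j`, `ξ ↦ ξ_j ± ξ_k` (`j < k`). -/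
def LinForms (n : ℕ) : Set ((Fin n → ℂ) → ℂ) :=
  {L | (∃ j, L = fun ξ => 2 * ξ j) ∨
    ∃ j k : Fin n, j < k ∧ ((L = fun ξ => ξ j + ξ k) ∨ L = fun ξ => ξ j - ξ k)}

/-- Exponential damping factor `e^{-c·l·⟨α,ρ⟩}`. -/
def damp (n : ℕ) (c : ℝ) (l : ℕ) (α : Fin n → ℤ) : ℂ :=
  Complex.exp (((-(c * (l : ℝ) * ((rp α : ℤ) : ℝ))) : ℝ) : ℂ)

/-- RHS of the (rescaled) Calogero–Sutherland Harish-Chandra recurrence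
`∑_{α ∈ R₊} ∑_{l ≥ 1} l e^{-c l ⟨α,ρ⟩} a^{cs}_α(k) a_{ν - lα}` (a finite sum since the
terms with `l > ⟨ν,ρ⟩` vanish). -/
def csRHS (k : ℂ × ℂ × ℂ) (c : ℝ) (a : (Fin n → ℤ) → ℂ) (ν : Fin n → ℤ) : ℂ :=
  ∑ l ∈ Finset.Icc 1 (rp ν).toNat, (l : ℂ) *
    ((∑ j : Fin n, damp n c l (eZ n (j : ℕ)) * (k.2.1 * (k.2.1 + 2 * k.2.2 - 1)) *
        a (ν - l • eZ n (j : ℕ)))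
      + (∑ j : Fin n, damp n c l (2 • eZ n (j : ℕ)) * (4 * k.2.2 * (k.2.2 - 1)) *
          a (ν - l • (2 • eZ n (j : ℕ))))
      + ∑ j : Fin n, ∑ j' ∈ Finset.Ioi j,
          (damp n c l (eZ n (j : ℕ) + eZ n (j' : ℕ)) * (2 * k.1 * (k.1 - 1)) *
              a (ν - l • (eZ n (j : ℕ) + eZ n (j' : ℕ)))
            + damp n c l (eZ n (j : ℕ) - eZ n (j' : ℕ)) * (2 * k.1 * (k.1 - 1)) *
                a (ν - l • (eZ n (j : ℕ) - eZ n (j' : ℕ)))))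

/-- `a` is the family of Calogero–Sutherland Harish-Chandra coefficients `ν ↦ a^{cs}_ν(ξ;k)`. -/
def IsHCcs (k : ℂ × ℂ × ℂ) (ξ : Fin n → ℂ) (a : (Fin n → ℤ) → ℂ) : Prop :=
  a 0 = 1 ∧ (∀ ν, ¬ dominant ν → a ν = 0) ∧
    ∀ ν, dominant ν → ν ≠ 0 → pc (zc ν - 2 • ξ) (zc ν) * a ν = csRHS k 0 a ν

/-- `a` is the family of rescaled coefficients `ν ↦ â^{cs}_ν(ξ;k)` (with damping `c` and
initial value `Δval`). -/
def IsHCcsResc (k : ℂ × ℂ × ℂ) (c : ℝ) (Δval : ℂ) (ξ : Fin n → ℂ)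
    (a : (Fin n → ℤ) → ℂ) : Prop :=
  a 0 = Δval ∧ (∀ ν, ¬ dominant ν → a ν = 0) ∧
    ∀ ν, dominant ν → ν ≠ 0 → pc (zc ν - 2 • ξ) (zc ν) * a ν = csRHS k c a ν

/-- The open Weyl chamber `𝔸ⁿ = {x ∈ ℝⁿ ∣ x₁ > x₂ > ⋯ > xₙ > 0}`. -/
def Achamber (n : ℕ) : Set (Fin n → ℝ) :=
  {x | (∀ j k : Fin n, j < k → x k < x j) ∧ ∀ j, 0 < x j}

/-- The coupling parameters `k^{(c)} = (k₀^{(c)}, 2g, k₂^{(c)})` with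
`k₀^{(c)}(k₀^{(c)}-1) = e^c`, `k₂^{(c)}(k₂^{(c)}-1) = e^{2c}/16`, `k₀^{(c)}, k₂^{(c)} > 0`. -/
def kParam (g : ℂ) (c : ℝ) : ℂ × ℂ × ℂ :=
  ((((1 + Real.sqrt (1 + 4 * Real.exp c)) / 2 : ℝ) : ℂ), 2 * g,
    (((1 + Real.sqrt (1 + Real.exp c ^ 2 / 4)) / 2 : ℝ) : ℂ))

/-- The Calogero–Sutherland `c`-function `C^{cs}(ξ;k)`. -/
def Ccs (k : ℂ × ℂ × ℂ) (ξ : Fin n → ℂ) : ℂ :=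
  (∏ j, Complex.Gamma (2 * ξ j) * Complex.Gamma (k.2.1 / 2 + ξ j) /
      (Complex.Gamma (k.2.1 + 2 * ξ j) * Complex.Gamma (k.2.1 / 2 + k.2.2 + ξ j))) *
    ∏ j, ∏ k' ∈ Finset.Ioi j,
      Complex.Gamma (ξ j + ξ k') * Complex.Gamma (ξ j - ξ k') /
        (Complex.Gamma (k.1 + ξ j + ξ k') * Complex.Gamma (k.1 + ξ j - ξ k'))

/-- The normalization constant `γ(k)`. -/
def gammaNorm (n : ℕ) (k : ℂ × ℂ × ℂ) : ℂ :=
  Complex.Gamma k.1 ^ (n * (n - 1)) *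
    (Complex.Gamma k.2.1 * Complex.Gamma (k.2.1 / 2 + k.2.2) /
      (Complex.Gamma (k.2.1 / 2) * Complex.Gamma (1 / 2 + k.2.1 / 2))) ^ n



/-! ### Auxiliary lemmas -/

lemma rp_sub (a b : Fin n → ℤ) : rp (a - b) = rp a - rp b := by
  simp [rp, sub_mul, Finset.sum_sub_distrib]

lemma rp_add' (a b : Fin n → ℤ) : rp (a + b) = rp a + rp b := by
  simp [rp, add_mul, Finset.sum_add_distrib]

lemma rp_nsmul (l : ℕ) (a : Fin n → ℤ) : rp (l • a) = (l : ℤ) * rp a := by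
  simp [rp, Finset.mul_sum, mul_assoc]

lemma rp_eZ (k : ℕ) (hk : k < n) : rp (eZ n k) = ((n - k : ℕ) : ℤ) := by
  rw [rp, Finset.sum_eq_single (⟨k, hk⟩ : Fin n)]
  · simp [eZ]; omega
  · intro b _ hb
    have : (b : ℕ) ≠ k := by
      intro h; exact hb (by ext; simp [h])
    simp [eZ, this]
  · simp

lemma rp_eq_partial (ν : Fin n → ℤ) :
    rp ν = ∑ k : Fin n, ∑ j ∈ Finset.Iic k, ν j := by
  have h1 : ∀ k : Fin n, ∑ j ∈ Finset.Iic k, ν j = ∑ j : Fin n, if j ≤ k then ν j else 0 := by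
    intro k
    rw [← Finset.sum_filter]
    congr 1
    ext j; simp
  simp only [h1]
  rw [Finset.sum_comm]
  apply Finset.sum_congr rfl
  intro j _
  rw [← Finset.sum_filter, Finset.sum_const]
  have : (Finset.univ.filter (fun k : Fin n => j ≤ k)) = Finset.Ici j := by ext k; simp
  rw [this, Fin.card_Ici]
  have hj : (j : ℕ) < n := j.isLt
  rw [nsmul_eq_mul, Nat.cast_sub hj.le]
  push_cast
  ring

lemma rp_nonneg {ν : Fin n → ℤ} (hν : dominant ν) : 0 ≤ rp ν := by
  rw [rp_eq_partial]
  exact Finset.sum_nonneg fun k _ => hν k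

lemma eq_zero_of_rp_eq_zero {ν : Fin n → ℤ} (hν : dominant ν) (h : rp ν = 0) : ν = 0 := by
  have hall : ∀ k : Fin n, ∑ j ∈ Finset.Iic k, ν j = 0 := by
    have := (Finset.sum_eq_zero_iff_of_nonneg (fun k _ => hν k)).mp (by
      rw [← rp_eq_partial]; exact h)
    intro k; exact this k (Finset.mem_univ k)
  have key : ∀ m : ℕ, ∀ k : Fin n, (k : ℕ) = m → ν k = 0 := by
    intro m
    induction m using Nat.strong_induction_on with
    | _ m ih =>
      intro k hk
      have hins : Finset.Iic k = insert k (Finset.Iio k) := (Finset.Iio_insert k).symm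
      have hnm : k ∉ Finset.Iio k := by simp
      have h2 := hall k
      rw [hins, Finset.sum_insert hnm] at h2
      have h3 : ∑ j ∈ Finset.Iio k, ν j = 0 := by
        apply Finset.sum_eq_zero
        intro i hi
        have hik : i < k := Finset.mem_Iio.mp hi
        have : (i:ℕ) < (k:ℕ) := hik
        exact ih (i : ℕ) (by omega) i rfl
      rw [h3] at h2
      linarith
  funext k
  exact key (k : ℕ) k rfl


/-- `s₂(c) = √(1 + e^{2c}/4)`, so that `k₂^{(c)} = (1+s₂(c))/2`. -/
def s2 (c : ℝ) : ℝ := Real.sqrt (1 + Real.exp c ^ 2 / 4)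

lemma k1_id (g : ℂ) (c : ℝ) :
    (kParam g c).2.1 * ((kParam g c).2.1 + 2 * (kParam g c).2.2 - 1)
      = 2 * g * (2 * g + ((s2 c : ℝ) : ℂ)) := by
  simp only [kParam, s2]
  push_cast
  ring

lemma k0_real (c : ℝ) :
    (1 + Real.sqrt (1 + 4 * Real.exp c)) / 2 * ((1 + Real.sqrt (1 + 4 * Real.exp c)) / 2 - 1)
      = Real.exp c := by
  nlinarith [Real.sq_sqrt (show (0:ℝ) ≤ 1 + 4 * Real.exp c by positivity)]

lemma k2_real (c : ℝ) :
    (1 + Real.sqrt (1 + Real.exp c ^ 2 / 4)) / 2 *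
        ((1 + Real.sqrt (1 + Real.exp c ^ 2 / 4)) / 2 - 1)
      = Real.exp c ^ 2 / 16 := by
  nlinarith [Real.sq_sqrt (show (0:ℝ) ≤ 1 + Real.exp c ^ 2 / 4 by positivity)]

lemma k0_id (g : ℂ) (c : ℝ) :
    2 * (kParam g c).1 * ((kParam g c).1 - 1) = ((2 * Real.exp c : ℝ) : ℂ) := by
  have h := k0_real c
  simp only [kParam]
  rw [show ((2 * Real.exp c : ℝ) : ℂ) = ((2 * ((1 + Real.sqrt (1 + 4 * Real.exp c)) / 2 *
      ((1 + Real.sqrt (1 + 4 * Real.exp c)) / 2 - 1)) : ℝ) : ℂ) by rw [h]]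
  push_cast
  ring

lemma k2_id (g : ℂ) (c : ℝ) :
    4 * (kParam g c).2.2 * ((kParam g c).2.2 - 1) = ((Real.exp c ^ 2 / 4 : ℝ) : ℂ) := by
  have h := k2_real c
  simp only [kParam]
  rw [show ((Real.exp c ^ 2 / 4 : ℝ) : ℂ) = ((4 * ((1 + Real.sqrt (1 + Real.exp c ^ 2 / 4)) / 2 *
      ((1 + Real.sqrt (1 + Real.exp c ^ 2 / 4)) / 2 - 1)) : ℝ) : ℂ) by rw [h]; push_cast; ring]
  push_cast
  ring

lemma damp_eq (l : ℕ) (α : Fin n → ℤ) (m : ℕ) (hα : rp α = (m : ℤ)) (c : ℝ) :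
    damp n c l α = ((Real.exp (-(c * ((l * m : ℕ) : ℝ))) : ℝ) : ℂ) := by
  rw [damp, Complex.ofReal_exp, hα]
  congr 1
  push_cast
  ring

lemma limE (M : ℕ) (hM : 1 ≤ M) :
    Tendsto (fun c : ℝ => Real.exp (-(c * M))) atTop (𝓝 0) := by
  apply Real.tendsto_exp_atBot.comp
  exact tendsto_neg_atTop_atBot.comp
    (tendsto_id.atTop_mul_const (by exact_mod_cast hM : (0:ℝ) < (M:ℝ)))

lemma limEs2_one : Tendsto (fun c : ℝ => Real.exp (-c) * s2 c) atTop (𝓝 (1/2)) := by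
  have key : ∀ c : ℝ, Real.exp (-c) * s2 c = Real.sqrt (Real.exp (-c) ^ 2 + 1/4) := by
    intro c
    rw [s2]
    conv_lhs => rw [← Real.sqrt_sq (Real.exp_nonneg (-c))]
    rw [← Real.sqrt_mul (sq_nonneg _)]
    congr 1
    have h : Real.exp (-c) * Real.exp c = 1 := by rw [← Real.exp_add]; simp
    nlinarith [h]
  simp only [key]
  have he : Tendsto (fun c : ℝ => Real.exp (-c)) atTop (𝓝 0) := by
    simpa [mul_one] using limE 1 le_rfl
  have h2 : Tendsto (fun c : ℝ => Real.exp (-c) ^ 2 + 1/4) atTop (𝓝 ((1/2:ℝ)^2)) := by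
    have := (he.pow 2).add_const (1/4 : ℝ)
    norm_num at this ⊢
    convert this using 2
  have h3 := (Real.continuous_sqrt.tendsto _).comp h2
  simpa [Real.sqrt_sq (by norm_num : (0:ℝ) ≤ 1/2), Function.comp_def] using h3

lemma limEs2 (M : ℕ) (hM : 1 ≤ M) :
    Tendsto (fun c : ℝ => Real.exp (-(c * M)) * s2 c) atTop
      (𝓝 (if M = 1 then 1/2 else 0)) := by
  rcases eq_or_lt_of_le hM with h1 | h2
  · rw [if_pos h1.symm, ← h1]
    simpa [mul_one] using limEs2_one
  · rw [if_neg (by omega)]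
    have key : ∀ c : ℝ, Real.exp (-(c * M)) * s2 c
        = Real.exp (-(c * ((M - 1 : ℕ) : ℝ))) * (Real.exp (-c) * s2 c) := by
      intro c
      rw [← mul_assoc, ← Real.exp_add]
      congr 2
      rw [Nat.cast_sub hM]
      ring
    simp only [key]
    simpa using (limE (M - 1) (by omega)).mul limEs2_one

lemma limE2 (M : ℕ) (hM : 2 ≤ M) :
    Tendsto (fun c : ℝ => Real.exp (-(c * M)) * (Real.exp c ^ 2 / 4)) atTop
      (𝓝 (if M = 2 then 1/4 else 0)) := by
  have key : ∀ c : ℝ, Real.exp (-(c * M)) * (Real.exp c ^ 2 / 4)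
      = Real.exp (-(c * ((M - 2 : ℕ) : ℝ))) * (1/4) := by
    intro c
    rw [show -(c * ((M - 2 : ℕ) : ℝ)) = -(c * M) + c + c by rw [Nat.cast_sub hM]; ring,
      Real.exp_add, Real.exp_add]
    ring
  simp only [key]
  rcases eq_or_lt_of_le hM with h1 | h2
  · rw [if_pos h1.symm, ← h1]
    norm_num
  · rw [if_neg (by omega)]
    simpa using (limE (M - 2) (by omega)).mul_const (1/4 : ℝ)

lemma limE3 (M : ℕ) (hM : 1 ≤ M) :
    Tendsto (fun c : ℝ => Real.exp (-(c * M)) * (2 * Real.exp c)) atTop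
      (𝓝 (if M = 1 then 2 else 0)) := by
  have key : ∀ c : ℝ, Real.exp (-(c * M)) * (2 * Real.exp c)
      = Real.exp (-(c * ((M - 1 : ℕ) : ℝ))) * 2 := by
    intro c
    rw [show -(c * ((M - 1 : ℕ) : ℝ)) = -(c * M) + c by rw [Nat.cast_sub hM]; ring,
      Real.exp_add]
    ring
  simp only [key]
  rcases eq_or_lt_of_le hM with h1 | h2
  · rw [if_pos h1.symm, ← h1]
    norm_num
  · rw [if_neg (by omega)]
    simpa using (limE (M - 1) (by omega)).mul_const (2 : ℝ)

lemma ofReal_tendsto {f : ℝ → ℝ} {a : ℝ} (h : Tendsto f atTop (𝓝 a)) :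
    Tendsto (fun c : ℝ => ((f c : ℝ) : ℂ)) atTop (𝓝 (a : ℂ)) :=
  (Complex.continuous_ofReal.tendsto a).comp h

lemma lemC1 (g : ℂ) (M : ℕ) (hM : 1 ≤ M) :
    Tendsto (fun c : ℝ => ((Real.exp (-(c * M)) : ℝ) : ℂ) * (2 * g * (2 * g + ((s2 c : ℝ) : ℂ))))
      atTop (𝓝 (if M = 1 then g else 0)) := by
  have h1 := (ofReal_tendsto (limE M hM)).const_mul (2*g*(2*g))
  have h2 := (ofReal_tendsto (limEs2 M hM)).const_mul (2*g)
  have h3 := h1.add h2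
  have heq : ∀ c : ℝ, 2*g*(2*g) * ((Real.exp (-(c * M)) : ℝ) : ℂ)
      + 2*g * ((Real.exp (-(c * M)) * s2 c : ℝ) : ℂ)
      = ((Real.exp (-(c * M)) : ℝ) : ℂ) * (2 * g * (2 * g + ((s2 c : ℝ) : ℂ))) := by
    intro c; push_cast; ring
  have hval : 2*g*(2*g) * ((0:ℝ):ℂ) + 2*g * (((if M = 1 then 1/2 else 0 : ℝ)):ℂ)
      = (if M = 1 then g else 0) := by
    split_ifs <;> push_cast <;> ring
  rw [← hval]
  exact h3.congr heq

lemma lemC2 (M : ℕ) (hM : 2 ≤ M) :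
    Tendsto (fun c : ℝ => ((Real.exp (-(c * M)) : ℝ) : ℂ) * ((Real.exp c ^ 2 / 4 : ℝ) : ℂ))
      atTop (𝓝 (if M = 2 then (1/4 : ℂ) else 0)) := by
  have h := ofReal_tendsto (limE2 M hM)
  have heq : ∀ c : ℝ, ((Real.exp (-(c * M)) * (Real.exp c ^ 2 / 4) : ℝ) : ℂ)
      = ((Real.exp (-(c * M)) : ℝ) : ℂ) * ((Real.exp c ^ 2 / 4 : ℝ) : ℂ) := by
    intro c; push_cast; ring
  have hval : (((if M = 2 then 1/4 else 0 : ℝ)) : ℂ) = (if M = 2 then (1/4 : ℂ) else 0) := by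
    split_ifs <;> norm_num
  rw [← hval]
  exact h.congr heq

lemma lemC3 (M : ℕ) (hM : 1 ≤ M) :
    Tendsto (fun c : ℝ => ((Real.exp (-(c * M)) : ℝ) : ℂ) * ((2 * Real.exp c : ℝ) : ℂ))
      atTop (𝓝 (if M = 1 then (2 : ℂ) else 0)) := by
  have h := ofReal_tendsto (limE3 M hM)
  have heq : ∀ c : ℝ, ((Real.exp (-(c * M)) * (2 * Real.exp c) : ℝ) : ℂ)
      = ((Real.exp (-(c * M)) : ℝ) : ℂ) * ((2 * Real.exp c : ℝ) : ℂ) := by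
    intro c; push_cast; ring
  have hval : (((if M = 1 then 2 else 0 : ℝ)) : ℂ) = (if M = 1 then (2 : ℂ) else 0) := by
    split_ifs <;> norm_num
  rw [← hval]
  exact h.congr heq


lemma rp_sub_le (mu alpha : Fin n → ℤ) (l m : ℕ) (hα : rp alpha = (m : ℤ))
    (hl : 1 ≤ l) (hm : 1 ≤ m) : rp (mu - l • alpha) ≤ rp mu - 1 := by
  rw [rp_sub, rp_nsmul, hα]
  have h : (1 : ℤ) ≤ (l : ℤ) * (m : ℤ) := by
    have := Nat.one_le_iff_ne_zero.mpr (Nat.mul_ne_zero (by omega) (by omega) : l * m ≠ 0)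
    exact_mod_cast this
  linarith

/-- The rescaled Calogero–Sutherland Harish-Chandra coefficients converge to the normalized
Toda Harish-Chandra coefficients: `lim_{c→+∞} â^{cs}_ν(ξ;k^{(c)}) = Δ_U(ξ)·a_ν(ξ;g)`. -/
theorem statement16 (n : ℕ) (hn : 1 ≤ n)
    (U : Set (Fin n → ℂ)) (hUo : IsOpen U) (hUb : Bornology.IsBounded U)
    (hUc : IsConnected U) (g : ℂ)
    (T : Finset (Fin n → ℤ))
    (hT : ∀ μ : Fin n → ℤ, μ ∈ T ↔ dominant μ ∧ μ ≠ 0 ∧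
        ∃ ζ ∈ closure U, pc (zc μ - 2 • ζ) (zc μ) = 0)
    (ξ : Fin n → ℂ) (hξU : ξ ∈ U) (hξ : ξ ∈ Uset n)
    (aToda : (Fin n → ℤ) → ℂ) (ha : IsHC g ξ aToda)
    (ahat : ℝ → (Fin n → ℤ) → ℂ)
    (hahat : ∀ c : ℝ, 0 ≤ c →
      IsHCcsResc (kParam g c) c (∏ μ ∈ T, pc (zc μ - 2 • ξ) (zc μ)) ξ (ahat c))
    (ν : Fin n → ℤ) (hν : dominant ν) :
    Filter.Tendsto (fun c : ℝ => ahat c ν) Filter.atTop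
      (𝓝 ((∏ μ ∈ T, pc (zc μ - 2 • ξ) (zc μ)) * aToda ν)) := by
  classical
  set Δ : ℂ := ∏ μ ∈ T, pc (zc μ - 2 • ξ) (zc μ) with hΔ
  suffices H : ∀ N : ℕ, ∀ μ : Fin n → ℤ, dominant μ → (rp μ).toNat ≤ N →
      Tendsto (fun c : ℝ => ahat c μ) atTop (𝓝 (Δ * aToda μ)) by
    exact H (rp ν).toNat ν hν le_rfl
  have hbase : Tendsto (fun c : ℝ => ahat c 0) atTop (𝓝 (Δ * aToda 0)) := by
    rw [ha.1, mul_one]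
    apply Tendsto.congr' _ (tendsto_const_nhds (x := Δ))
    filter_upwards [eventually_ge_atTop (0:ℝ)] with c hc
    exact ((hahat c hc).1).symm
  intro N
  induction N with
  | zero =>
    intro μ hμ hle
    have h0 : rp μ = 0 := by have := rp_nonneg hμ; omega
    rw [eq_zero_of_rp_eq_zero hμ h0]
    exact hbase
  | succ N IH =>
    intro μ hμ hle
    by_cases hμ0 : μ = 0
    · rw [hμ0]; exact hbase
    have hkey : ∀ κ : Fin n → ℤ, rp κ ≤ rp μ - 1 →
        Tendsto (fun c : ℝ => ahat c κ) atTop (𝓝 (Δ * aToda κ)) := by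
      intro κ hκ
      by_cases hdom : dominant κ
      · apply IH κ hdom
        have h1 := rp_nonneg hμ
        have h2 := rp_nonneg hdom
        omega
      · rw [ha.2.1 κ hdom, mul_zero]
        apply Tendsto.congr' _ (tendsto_const_nhds (x := (0:ℂ)))
        filter_upwards [eventually_ge_atTop (0:ℝ)] with c hc
        exact ((hahat c hc).2.1 κ hdom).symm
    have hpc : pc (zc μ - 2 • ξ) (zc μ) ≠ 0 := hξ μ hμ hμ0
    have hrp1 : 1 ≤ rp μ := by
      have h1 := rp_nonneg hμ
      rcases eq_or_lt_of_le h1 with h | h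
      · exact absurd (eq_zero_of_rp_eq_zero hμ h.symm) hμ0
      · omega
    have hcs : Tendsto (fun c : ℝ => csRHS (kParam g c) c (ahat c) μ) atTop
        (𝓝 (Δ * todaRHS g aToda μ)) := by
      have hM1 : 1 ≤ (rp μ).toNat := by omega
      have hsum : Δ * todaRHS g aToda μ
          = ∑ l ∈ Finset.Icc 1 (rp μ).toNat,
              (if l = 1 then Δ * todaRHS g aToda μ else 0) := by
        rw [Finset.sum_ite_eq' (Finset.Icc 1 (rp μ).toNat) 1
          (fun _ => Δ * todaRHS g aToda μ), if_pos (Finset.mem_Icc.mpr ⟨le_rfl, hM1⟩)]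
      rw [hsum]
      simp only [csRHS]
      apply tendsto_finset_sum
      intro l hl
      obtain ⟨hl1, hlM⟩ := Finset.mem_Icc.mp hl
      have hA : Tendsto (fun c : ℝ => ∑ j : Fin n, damp n c l (eZ n (j : ℕ)) *
            ((kParam g c).2.1 * ((kParam g c).2.1 + 2 * (kParam g c).2.2 - 1)) *
            ahat c (μ - l • eZ n (j : ℕ))) atTop
          (𝓝 (∑ j : Fin n, (if l * (n - (j : ℕ)) = 1 then g else 0) *
            (Δ * aToda (μ - l • eZ n (j : ℕ))))) := by
        apply tendsto_finset_sum
        intro j _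
        have hjn : (j : ℕ) < n := j.isLt
        have hm : 1 ≤ n - (j : ℕ) := by omega
        have hrpe : rp (eZ n (j : ℕ)) = ((n - (j : ℕ) : ℕ) : ℤ) := rp_eZ _ hjn
        have hd := damp_eq l (eZ n (j : ℕ)) (n - (j : ℕ)) hrpe
        simp only [hd, k1_id]
        exact (lemC1 g (l * (n - (j : ℕ)))
            (Nat.one_le_iff_ne_zero.mpr (Nat.mul_ne_zero (by omega) (by omega)))).mul
          (hkey _ (rp_sub_le μ _ l (n - (j : ℕ)) hrpe hl1 hm))
      have hB : Tendsto (fun c : ℝ => ∑ j : Fin n, damp n c l (2 • eZ n (j : ℕ)) *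
            (4 * (kParam g c).2.2 * ((kParam g c).2.2 - 1)) *
            ahat c (μ - l • (2 • eZ n (j : ℕ)))) atTop
          (𝓝 (∑ j : Fin n, (if l * (2 * (n - (j : ℕ))) = 2 then (1/4 : ℂ) else 0) *
            (Δ * aToda (μ - l • (2 • eZ n (j : ℕ)))))) := by
        apply tendsto_finset_sum
        intro j _
        have hjn : (j : ℕ) < n := j.isLt
        have hm : 1 ≤ n - (j : ℕ) := by omega
        have hrpe : rp (2 • eZ n (j : ℕ)) = ((2 * (n - (j : ℕ)) : ℕ) : ℤ) := by
          rw [rp_nsmul, rp_eZ _ hjn]; push_cast [Nat.cast_sub hjn.le]; omega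
        have hd := damp_eq l (2 • eZ n (j : ℕ)) (2 * (n - (j : ℕ))) hrpe
        have h2M : 2 ≤ l * (2 * (n - (j : ℕ))) := by
          have h1 : 2 ≤ 2 * (n - (j : ℕ)) := by omega
          exact le_trans h1 (Nat.le_mul_of_pos_left _ (by omega))
        simp only [hd, k2_id]
        exact (lemC2 (l * (2 * (n - (j : ℕ)))) h2M).mul
          (hkey _ (rp_sub_le μ _ l (2 * (n - (j : ℕ))) hrpe hl1 (by omega)))
      have hC : Tendsto (fun c : ℝ => ∑ j : Fin n, ∑ j' ∈ Finset.Ioi j,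
            (damp n c l (eZ n (j : ℕ) + eZ n (j' : ℕ)) *
                (2 * (kParam g c).1 * ((kParam g c).1 - 1)) *
                ahat c (μ - l • (eZ n (j : ℕ) + eZ n (j' : ℕ)))
              + damp n c l (eZ n (j : ℕ) - eZ n (j' : ℕ)) *
                  (2 * (kParam g c).1 * ((kParam g c).1 - 1)) *
                  ahat c (μ - l • (eZ n (j : ℕ) - eZ n (j' : ℕ))))) atTop
          (𝓝 (∑ j : Fin n, ∑ j' ∈ Finset.Ioi j,
            ((if l * (2 * n - (j : ℕ) - (j' : ℕ)) = 1 then (2 : ℂ) else 0) *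
                (Δ * aToda (μ - l • (eZ n (j : ℕ) + eZ n (j' : ℕ))))
              + (if l * ((j' : ℕ) - (j : ℕ)) = 1 then (2 : ℂ) else 0) *
                  (Δ * aToda (μ - l • (eZ n (j : ℕ) - eZ n (j' : ℕ))))))) := by
        apply tendsto_finset_sum
        intro j _
        apply tendsto_finset_sum
        intro j' hj'
        have hjj' : (j : ℕ) < (j' : ℕ) := Fin.lt_def.mp (Finset.mem_Ioi.mp hj')
        have hj'n : (j' : ℕ) < n := j'.isLt
        have hrpP : rp (eZ n (j : ℕ) + eZ n (j' : ℕ)) = ((2 * n - (j : ℕ) - (j' : ℕ) : ℕ) : ℤ) := by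
          rw [rp_add', rp_eZ _ j.isLt, rp_eZ _ hj'n]; omega
        have hrpM : rp (eZ n (j : ℕ) - eZ n (j' : ℕ)) = (((j' : ℕ) - (j : ℕ) : ℕ) : ℤ) := by
          rw [rp_sub, rp_eZ _ j.isLt, rp_eZ _ hj'n]; omega
        have hdP := damp_eq l _ _ hrpP
        have hdM := damp_eq l _ _ hrpM
        simp only [hdP, hdM, k0_id]
        refine Tendsto.add ?_ ?_
        · exact (lemC3 (l * (2 * n - (j : ℕ) - (j' : ℕ)))
              (Nat.one_le_iff_ne_zero.mpr (Nat.mul_ne_zero (by omega) (by omega)))).mul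
            (hkey _ (rp_sub_le μ _ l _ hrpP hl1 (by omega)))
        · exact (lemC3 (l * ((j' : ℕ) - (j : ℕ)))
              (Nat.one_le_iff_ne_zero.mpr (Nat.mul_ne_zero (by omega) (by omega)))).mul
            (hkey _ (rp_sub_le μ _ l _ hrpM hl1 (by omega)))
      have hval : ((l : ℕ) : ℂ) *
            ((∑ j : Fin n, (if l * (n - (j : ℕ)) = 1 then g else 0) *
                (Δ * aToda (μ - l • eZ n (j : ℕ)))
              + ∑ j : Fin n, (if l * (2 * (n - (j : ℕ))) = 2 then (1/4 : ℂ) else 0) *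
                  (Δ * aToda (μ - l • (2 • eZ n (j : ℕ)))))
              + ∑ j : Fin n, ∑ j' ∈ Finset.Ioi j,
                ((if l * (2 * n - (j : ℕ) - (j' : ℕ)) = 1 then (2 : ℂ) else 0) *
                    (Δ * aToda (μ - l • (eZ n (j : ℕ) + eZ n (j' : ℕ))))
                  + (if l * ((j' : ℕ) - (j : ℕ)) = 1 then (2 : ℂ) else 0) *
                      (Δ * aToda (μ - l • (eZ n (j : ℕ) - eZ n (j' : ℕ))))))
          = (if l = 1 then Δ * todaRHS g aToda μ else 0) := by
        by_cases hll : l = 1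
        · subst hll
          rw [if_pos rfl, Nat.cast_one, one_mul]
          simp only [one_mul, one_smul]
          have eA : (∑ j : Fin n, (if n - (j : ℕ) = 1 then g else 0) *
                (Δ * aToda (μ - eZ n (j : ℕ))))
              = g * (Δ * aToda (μ - eZ n (n - 1))) := by
            have e1 : ∀ j : Fin n, (if n - (j : ℕ) = 1 then g else 0) *
                  (Δ * aToda (μ - eZ n (j : ℕ)))
                = if j = (⟨n - 1, by omega⟩ : Fin n) then
                    g * (Δ * aToda (μ - eZ n (j : ℕ))) else 0 := by
              intro j
              by_cases hj : j = (⟨n - 1, by omega⟩ : Fin n)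
              · have hjv : (j : ℕ) = n - 1 := by rw [hj]
                rw [if_pos (by omega), if_pos hj]
              · have hjv : (j : ℕ) ≠ n - 1 := fun h => hj (Fin.ext h)
                have hjn : (j : ℕ) < n := j.isLt
                rw [if_neg (by omega), if_neg hj, zero_mul]
            have h1 := Finset.sum_congr rfl (fun (j : Fin n) (_ : j ∈ Finset.univ) => e1 j)
            rw [h1, Finset.sum_ite_eq' Finset.univ _ _, if_pos (Finset.mem_univ _)]
          have eB : (∑ j : Fin n, (if 2 * (n - (j : ℕ)) = 2 then (1/4 : ℂ) else 0) *
                (Δ * aToda (μ - 2 • eZ n (j : ℕ))))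
              = (1/4 : ℂ) * (Δ * aToda (μ - 2 • eZ n (n - 1))) := by
            have e1 : ∀ j : Fin n, (if 2 * (n - (j : ℕ)) = 2 then (1/4 : ℂ) else 0) *
                  (Δ * aToda (μ - 2 • eZ n (j : ℕ)))
                = if j = (⟨n - 1, by omega⟩ : Fin n) then
                    (1/4 : ℂ) * (Δ * aToda (μ - 2 • eZ n (j : ℕ))) else 0 := by
              intro j
              by_cases hj : j = (⟨n - 1, by omega⟩ : Fin n)
              · have hjv : (j : ℕ) = n - 1 := by rw [hj]
                rw [if_pos (by omega), if_pos hj]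
              · have hjv : (j : ℕ) ≠ n - 1 := fun h => hj (Fin.ext h)
                have hjn : (j : ℕ) < n := j.isLt
                rw [if_neg (by omega), if_neg hj, zero_mul]
            have h1 := Finset.sum_congr rfl (fun (j : Fin n) (_ : j ∈ Finset.univ) => e1 j)
            rw [h1, Finset.sum_ite_eq' Finset.univ _ _, if_pos (Finset.mem_univ _)]
          have eC : (∑ j : Fin n, ∑ j' ∈ Finset.Ioi j,
                ((if 2 * n - (j : ℕ) - (j' : ℕ) = 1 then (2 : ℂ) else 0) *
                    (Δ * aToda (μ - (eZ n (j : ℕ) + eZ n (j' : ℕ))))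
                  + (if (j' : ℕ) - (j : ℕ) = 1 then (2 : ℂ) else 0) *
                      (Δ * aToda (μ - (eZ n (j : ℕ) - eZ n (j' : ℕ))))))
              = ∑ k ∈ Finset.range (n - 1),
                  2 * (Δ * aToda (μ - (eZ n k - eZ n (k + 1)))) := by
            have inner : ∀ j : Fin n, (∑ j' ∈ Finset.Ioi j,
                ((if 2 * n - (j : ℕ) - (j' : ℕ) = 1 then (2 : ℂ) else 0) *
                    (Δ * aToda (μ - (eZ n (j : ℕ) + eZ n (j' : ℕ))))
                  + (if (j' : ℕ) - (j : ℕ) = 1 then (2 : ℂ) else 0) *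
                      (Δ * aToda (μ - (eZ n (j : ℕ) - eZ n (j' : ℕ))))))
                = if (j : ℕ) + 1 < n then
                    2 * (Δ * aToda (μ - (eZ n (j : ℕ) - eZ n ((j : ℕ) + 1)))) else 0 := by
              intro j
              have hjn : (j : ℕ) < n := j.isLt
              have step : ∀ (j' : Fin n), j' ∈ Finset.Ioi j →
                  ((if 2 * n - (j : ℕ) - (j' : ℕ) = 1 then (2 : ℂ) else 0) *
                      (Δ * aToda (μ - (eZ n (j : ℕ) + eZ n (j' : ℕ))))
                    + (if (j' : ℕ) - (j : ℕ) = 1 then (2 : ℂ) else 0) *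
                        (Δ * aToda (μ - (eZ n (j : ℕ) - eZ n (j' : ℕ)))))
                  = (if (j' : ℕ) - (j : ℕ) = 1 then (2 : ℂ) else 0) *
                      (Δ * aToda (μ - (eZ n (j : ℕ) - eZ n (j' : ℕ)))) := by
                intro j' hj'
                have hjj' : (j : ℕ) < (j' : ℕ) := Fin.lt_def.mp (Finset.mem_Ioi.mp hj')
                have hj'n : (j' : ℕ) < n := j'.isLt
                rw [if_neg (by omega), zero_mul, zero_add]
              rw [Finset.sum_congr rfl step]
              by_cases hjn1 : (j : ℕ) + 1 < n
              · rw [if_pos hjn1]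
                have e2 : ∀ (j' : Fin n), j' ∈ Finset.Ioi j →
                    (if (j' : ℕ) - (j : ℕ) = 1 then (2 : ℂ) else 0) *
                        (Δ * aToda (μ - (eZ n (j : ℕ) - eZ n (j' : ℕ))))
                      = if j' = (⟨(j : ℕ) + 1, hjn1⟩ : Fin n) then
                          2 * (Δ * aToda (μ - (eZ n (j : ℕ) - eZ n (j' : ℕ)))) else 0 := by
                  intro j' hj'
                  have hjj' : (j : ℕ) < (j' : ℕ) := Fin.lt_def.mp (Finset.mem_Ioi.mp hj')
                  by_cases hj2 : j' = (⟨(j : ℕ) + 1, hjn1⟩ : Fin n)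
                  · have hv : (j' : ℕ) = (j : ℕ) + 1 := by rw [hj2]
                    rw [if_pos (by omega), if_pos hj2]
                  · have hv : (j' : ℕ) ≠ (j : ℕ) + 1 := fun h => hj2 (Fin.ext h)
                    rw [if_neg (by omega), if_neg hj2, zero_mul]
                rw [Finset.sum_congr rfl e2, Finset.sum_ite_eq' (Finset.Ioi j) _ _,
                  if_pos (Finset.mem_Ioi.mpr (Fin.lt_def.mpr (by simp)))]
              · rw [if_neg hjn1]
                apply Finset.sum_eq_zero
                intro j' hj'
                have hjj' : (j : ℕ) < (j' : ℕ) := Fin.lt_def.mp (Finset.mem_Ioi.mp hj')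
                have hj'n : (j' : ℕ) < n := j'.isLt
                rw [if_neg (by omega), zero_mul]
            rw [Finset.sum_congr rfl (fun (j : Fin n) (_ : j ∈ Finset.univ) => inner j)]
            rw [Fin.sum_univ_eq_sum_range (fun k => if k + 1 < n then
              2 * (Δ * aToda (μ - (eZ n k - eZ n (k + 1)))) else 0) n]
            rw [← Finset.sum_filter]
            congr 1
            ext a
            simp only [Finset.mem_filter, Finset.mem_range]
            omega
          rw [eA, eB, eC]
          have hCs : (∑ k ∈ Finset.range (n - 1),
                2 * (Δ * aToda (μ - (eZ n k - eZ n (k + 1)))))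
              = Δ * ∑ k ∈ Finset.range (n - 1), 2 * aToda (μ - (eZ n k - eZ n (k + 1))) := by
            rw [Finset.mul_sum]
            exact Finset.sum_congr rfl fun k _ => by ring
          rw [hCs, todaRHS]
          ring
        · rw [if_neg hll]
          have hA0 : (∑ j : Fin n, (if l * (n - (j : ℕ)) = 1 then g else 0) *
              (Δ * aToda (μ - l • eZ n (j : ℕ)))) = 0 := by
            apply Finset.sum_eq_zero
            intro j _
            have hc : ¬ (l * (n - (j : ℕ)) = 1) := by
              intro h
              exact hll (Nat.dvd_one.mp ⟨_, h.symm⟩)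
            rw [if_neg hc, zero_mul]
          have hB0 : (∑ j : Fin n, (if l * (2 * (n - (j : ℕ))) = 2 then (1/4 : ℂ) else 0) *
              (Δ * aToda (μ - l • (2 • eZ n (j : ℕ))))) = 0 := by
            apply Finset.sum_eq_zero
            intro j _
            have hc : ¬ (l * (2 * (n - (j : ℕ))) = 2) := by
              intro h
              have hdvd : l ∣ 2 := ⟨_, h.symm⟩
              have hle : l ≤ 2 := Nat.le_of_dvd (by norm_num) hdvd
              have hl2 : l = 2 := by omega
              rw [hl2] at h
              omega
            rw [if_neg hc, zero_mul]
          have hC0 : (∑ j : Fin n, ∑ j' ∈ Finset.Ioi j,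
              ((if l * (2 * n - (j : ℕ) - (j' : ℕ)) = 1 then (2 : ℂ) else 0) *
                  (Δ * aToda (μ - l • (eZ n (j : ℕ) + eZ n (j' : ℕ))))
                + (if l * ((j' : ℕ) - (j : ℕ)) = 1 then (2 : ℂ) else 0) *
                    (Δ * aToda (μ - l • (eZ n (j : ℕ) - eZ n (j' : ℕ)))))) = 0 := by
            apply Finset.sum_eq_zero
            intro j _
            apply Finset.sum_eq_zero
            intro j' _
            have hc1 : ¬ (l * (2 * n - (j : ℕ) - (j' : ℕ)) = 1) := by
              intro h
              exact hll (Nat.dvd_one.mp ⟨_, h.symm⟩)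
            have hc2 : ¬ (l * ((j' : ℕ) - (j : ℕ)) = 1) := by
              intro h
              exact hll (Nat.dvd_one.mp ⟨_, h.symm⟩)
            rw [if_neg hc1, if_neg hc2, zero_mul, zero_mul, add_zero]
          rw [hA0, hB0, hC0]
          ring
      rw [← hval]
      exact ((hA.add hB).add hC).const_mul _
    have hfinal : Tendsto (fun c : ℝ => (pc (zc μ - 2 • ξ) (zc μ))⁻¹
        * csRHS (kParam g c) c (ahat c) μ) atTop (𝓝 (Δ * aToda μ)) := by
      have h2 := hcs.const_mul (pc (zc μ - 2 • ξ) (zc μ))⁻¹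
      rw [ha.2.2 μ hμ hμ0, mul_left_comm]
      exact h2
    apply hfinal.congr'
    filter_upwards [eventually_ge_atTop (0:ℝ)] with c hc
    have h := (hahat c hc).2.2 μ hμ hμ0
    exact (inv_mul_eq_iff_eq_mul₀ hpc).mpr h.symm


end TodaBC
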